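/- Define F(τ₁) = α·τ₁·log(1 + (h₁/σ²)·E₁/τ₁) + (1−α)·(S−τ₁)·log(1 + (h₂/σ²)·E₂/(S−τ₁)) on (0, S), where S = T − τ_AP > 0, α ∈ (0,1), h₁,h₂,E₁,E₂,σ² > 0. Then F is strictly concave on (0,S) and its derivative has exactly one zero in (0,S), which is the unique maximizer of F. -/

import Mathlib

open Real Set Filter Topology

noncomputable def gg (c t : ℝ) : ℝ := t * Real.log (1 + c / t)
noncomputable def gg' (c t : ℝ) : ℝ := Real.log (1 + c / t) - c / (t + c)

lemma hasDerivAt_gg {c t : ℝ} (hc : 0 < c) (ht : 0 < t) :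
    HasDerivAt (gg c) (gg' c t) t := by
  have hpos : 0 < 1 + c / t := by positivity
  have h1 : HasDerivAt (fun t : ℝ => 1 + c / t) (c * (-(t ^ 2)⁻¹)) t := by
    simpa [div_eq_mul_inv] using ((hasDerivAt_inv ht.ne').const_mul c).const_add 1
  have h2 : HasDerivAt (fun t : ℝ => Real.log (1 + c / t))
      (c * (-(t ^ 2)⁻¹) / (1 + c / t)) t := h1.log hpos.ne'
  have h3 := (hasDerivAt_id t).mul h2
  have he : gg' c t = 1 * Real.log (1 + c / t) + id t * (c * (-(t ^ 2)⁻¹) / (1 + c / t)) := by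
    unfold gg'
    field_simp
    simp only [id]
    ring
  rw [he]
  exact h3

lemma hasDerivAt_gg' {c t : ℝ} (hc : 0 < c) (ht : 0 < t) :
    HasDerivAt (gg' c) (-(c ^ 2) / (t * (t + c) ^ 2)) t := by
  have hpos : 0 < 1 + c / t := by positivity
  have htc : 0 < t + c := by positivity
  have h1 : HasDerivAt (fun t : ℝ => 1 + c / t) (c * (-(t ^ 2)⁻¹)) t := by
    simpa [div_eq_mul_inv] using ((hasDerivAt_inv ht.ne').const_mul c).const_add 1
  have h2 : HasDerivAt (fun t : ℝ => Real.log (1 + c / t))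
      (c * (-(t ^ 2)⁻¹) / (1 + c / t)) t := h1.log hpos.ne'
  have h4 : HasDerivAt (fun t : ℝ => t + c) 1 t := (hasDerivAt_id t).add_const c
  have h5 : HasDerivAt (fun t : ℝ => c / (t + c)) (c * (-1 / (t + c) ^ 2)) t := by
    simpa [div_eq_mul_inv] using ((h4.inv htc.ne').const_mul c)
  have h6 := h2.sub h5
  have he : -(c ^ 2) / (t * (t + c) ^ 2)
      = c * (-(t ^ 2)⁻¹) / (1 + c / t) - c * (-1 / (t + c) ^ 2) := by
    field_simp
    ring
  rw [he]
  exact h6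

lemma gg'_strictAntiOn {c : ℝ} (hc : 0 < c) : StrictAntiOn (gg' c) (Ioi 0) := by
  apply strictAntiOn_of_deriv_neg (convex_Ioi 0)
  · exact fun x hx => (hasDerivAt_gg' hc hx).continuousAt.continuousWithinAt
  · intro x hx
    rw [interior_Ioi] at hx
    have hx' : (0:ℝ) < x := hx
    rw [(hasDerivAt_gg' hc hx).deriv]
    have h1 : 0 < c ^ 2 / (x * (x + c) ^ 2) := by positivity
    rw [neg_div]
    linarith

lemma gg'_tendsto {c : ℝ} (hc : 0 < c) : Tendsto (gg' c) (𝓝[>] 0) atTop := by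
  have h1 : Tendsto (fun t : ℝ => c / t) (𝓝[>] 0) atTop := by
    simpa [div_eq_mul_inv] using tendsto_inv_nhdsGT_zero.const_mul_atTop hc
  have h2 : Tendsto (fun t : ℝ => Real.log (1 + c / t)) (𝓝[>] 0) atTop :=
    Real.tendsto_log_atTop.comp (tendsto_atTop_add_const_left _ 1 h1)
  have h3 : Tendsto (fun t : ℝ => Real.log (1 + c / t) + (-1)) (𝓝[>] 0) atTop :=
    tendsto_atTop_add_const_right _ (-1) h2
  apply tendsto_atTop_mono' _ _ h3
  filter_upwards [self_mem_nhdsWithin] with t (ht : 0 < t)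
  have htc : 0 < t + c := by positivity
  have : c / (t + c) ≤ 1 := by
    rw [div_le_one htc]; linarith
  unfold gg'
  linarith

/-- The time-allocation sub-problem objective
`F(τ₁) = α τ₁ log(1 + (h₁/σ²) E₁/τ₁) + (1−α)(S−τ₁) log(1 + (h₂/σ²) E₂/(S−τ₁))`
is strictly concave on `(0,S)` and its derivative has a unique zero in `(0,S)`,
which is the unique maximizer of `F` on `(0,S)`. -/
theorem time_allocation_unique_max (α h₁ h₂ E₁ E₂ σ2 S : ℝ)
    (hα : α ∈ Set.Ioo (0 : ℝ) 1) (hh₁ : 0 < h₁) (hh₂ : 0 < h₂)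
    (hE₁ : 0 < E₁) (hE₂ : 0 < E₂) (hσ : 0 < σ2) (hS : 0 < S) :
    StrictConcaveOn ℝ (Set.Ioo 0 S)
      (fun τ₁ : ℝ => α * τ₁ * Real.log (1 + (h₁ / σ2) * (E₁ / τ₁)) +
        (1 - α) * (S - τ₁) * Real.log (1 + (h₂ / σ2) * (E₂ / (S - τ₁)))) ∧
    ∃ τ ∈ Set.Ioo (0 : ℝ) S,
      deriv (fun τ₁ : ℝ => α * τ₁ * Real.log (1 + (h₁ / σ2) * (E₁ / τ₁)) +
        (1 - α) * (S - τ₁) * Real.log (1 + (h₂ / σ2) * (E₂ / (S - τ₁)))) τ = 0 ∧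
      (∀ τ' ∈ Set.Ioo (0 : ℝ) S,
        deriv (fun τ₁ : ℝ => α * τ₁ * Real.log (1 + (h₁ / σ2) * (E₁ / τ₁)) +
          (1 - α) * (S - τ₁) * Real.log (1 + (h₂ / σ2) * (E₂ / (S - τ₁)))) τ' = 0 → τ' = τ) ∧
      ∀ t ∈ Set.Ioo (0 : ℝ) S,
        (α * t * Real.log (1 + (h₁ / σ2) * (E₁ / t)) +
          (1 - α) * (S - t) * Real.log (1 + (h₂ / σ2) * (E₂ / (S - t)))) ≤
        (α * τ * Real.log (1 + (h₁ / σ2) * (E₁ / τ)) +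
          (1 - α) * (S - τ) * Real.log (1 + (h₂ / σ2) * (E₂ / (S - τ)))) := by
  obtain ⟨hα0, hα1⟩ := hα
  have h1α : 0 < 1 - α := by linarith
  have hc₁ : 0 < h₁ / σ2 * E₁ := by positivity
  have hc₂ : 0 < h₂ / σ2 * E₂ := by positivity
  set c₁ : ℝ := h₁ / σ2 * E₁ with hc₁def
  set c₂ : ℝ := h₂ / σ2 * E₂ with hc₂def
  set G : ℝ → ℝ := fun τ => α * gg c₁ τ + (1 - α) * gg c₂ (S - τ) with hGdef
  have hfun : (fun τ₁ : ℝ => α * τ₁ * Real.log (1 + (h₁ / σ2) * (E₁ / τ₁)) +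
      (1 - α) * (S - τ₁) * Real.log (1 + (h₂ / σ2) * (E₂ / (S - τ₁)))) = G := by
    funext t
    simp only [hGdef, gg, hc₁def, hc₂def, mul_div_assoc, mul_assoc]
  rw [hfun]
  set G' : ℝ → ℝ := fun τ => α * gg' c₁ τ - (1 - α) * gg' c₂ (S - τ) with hG'def
  have hG : ∀ τ ∈ Ioo (0:ℝ) S, HasDerivAt G (G' τ) τ := by
    intro τ hτ
    have hτ2 : 0 < S - τ := by have := hτ.2; linarith
    have hd1 := (hasDerivAt_gg hc₁ hτ.1).const_mul α
    have hin : HasDerivAt (fun τ : ℝ => S - τ) (-1) τ := (hasDerivAt_id τ).const_sub S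
    have hd2 := ((hasDerivAt_gg hc₂ hτ2).comp τ hin).const_mul (1 - α)
    have := hd1.add hd2
    have he : G' τ = α * gg' c₁ τ + (1 - α) * (gg' c₂ (S - τ) * -1) := by
      simp only [hG'def]; ring
    rw [he]
    exact this
  have hderiv : ∀ τ ∈ Ioo (0:ℝ) S, deriv G τ = G' τ := fun τ hτ => (hG τ hτ).deriv
  have hanti : StrictAntiOn G' (Ioo 0 S) := by
    intro x hx y hy hxy
    have A := gg'_strictAntiOn hc₁ hx.1 hy.1 hxy
    have B := gg'_strictAntiOn hc₂ (show S - y ∈ Ioi (0:ℝ) from sub_pos.2 hy.2)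
      (show S - x ∈ Ioi (0:ℝ) from sub_pos.2 hx.2) (by linarith)
    simp only [hG'def]
    nlinarith [mul_lt_mul_of_pos_left A hα0, mul_lt_mul_of_pos_left B h1α]
  have hcont : ContinuousOn G (Ioo 0 S) :=
    fun x hx => (hG x hx).continuousAt.continuousWithinAt
  have hconc : StrictConcaveOn ℝ (Ioo (0:ℝ) S) G := by
    apply StrictAntiOn.strictConcaveOn_of_deriv (convex_Ioo 0 S) hcont
    rw [interior_Ioo]
    intro x hx y hy hxy
    rw [hderiv x hx, hderiv y hy]
    exact hanti hx hy hxy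
  refine ⟨hconc, ?_⟩
  have hS2 : (0:ℝ) < S / 2 := by linarith
  -- find a with G' a > 0
  have ht1 : Tendsto (fun t => α * gg' c₁ t) (𝓝[>] 0) atTop :=
    (gg'_tendsto hc₁).const_mul_atTop hα0
  have hmem : Ioo (0:ℝ) (S/2) ∈ 𝓝[>] (0:ℝ) :=
    Ioo_mem_nhdsGT_of_mem ⟨le_refl 0, hS2⟩
  obtain ⟨a, ha1, ha2⟩ :=
    ((ht1.eventually_gt_atTop ((1 - α) * gg' c₂ (S/2))).and (eventually_of_mem hmem (fun _ h => h))).exists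
  have haS : a ∈ Ioo (0:ℝ) S := ⟨ha2.1, by have := ha2.2; linarith⟩
  have hGa : 0 < G' a := by
    have hle : gg' c₂ (S - a) ≤ gg' c₂ (S / 2) := by
      apply (gg'_strictAntiOn hc₂).antitoneOn (mem_Ioi.2 hS2)
        (mem_Ioi.2 (by have := haS.2; linarith))
      have := ha2.2; linarith
    simp only [hG'def]
    nlinarith [mul_le_mul_of_nonneg_left hle h1α.le]
  -- find b with G' b < 0
  have ht2 : Tendsto (fun u => (1 - α) * gg' c₂ u) (𝓝[>] 0) atTop :=
    (gg'_tendsto hc₂).const_mul_atTop h1α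
  obtain ⟨u, hu1, hu2⟩ :=
    ((ht2.eventually_gt_atTop (α * gg' c₁ (S/2))).and (eventually_of_mem hmem (fun _ h => h))).exists
  set b : ℝ := S - u with hbdef
  have hbS : b ∈ Ioo (0:ℝ) S := ⟨by have := hu2.2; simp only [hbdef]; linarith,
    by have := hu2.1; simp only [hbdef]; linarith⟩
  have hGb : G' b < 0 := by
    have hle : gg' c₁ b ≤ gg' c₁ (S / 2) := by
      apply (gg'_strictAntiOn hc₁).antitoneOn (mem_Ioi.2 hS2) (mem_Ioi.2 hbS.1)
      have := hu2.2; simp only [hbdef]; linarith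
    have hSb : S - b = u := by simp [hbdef]
    simp only [hG'def, hSb]
    nlinarith [mul_le_mul_of_nonneg_left hle hα0.le]
  have hab : a ≤ b := by
    have := ha2.2; have := hu2.2; simp only [hbdef]; linarith
  have hsub : Icc a b ⊆ Ioo (0:ℝ) S :=
    fun x hx => ⟨lt_of_lt_of_le haS.1 hx.1, lt_of_le_of_lt hx.2 hbS.2⟩
  have hcontG' : ContinuousOn G' (Icc a b) := by
    intro x hx
    have hxS := hsub hx
    have hx2 : 0 < S - x := by have := hxS.2; linarith
    have A : ContinuousAt (gg' c₁) x := (hasDerivAt_gg' hc₁ hxS.1).continuousAt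
    have B : ContinuousAt (fun τ => gg' c₂ (S - τ)) x :=
      ((hasDerivAt_gg' hc₂ hx2).continuousAt).comp
        ((continuous_const.sub continuous_id).continuousAt)
    exact ((continuousAt_const.mul A).sub (continuousAt_const.mul B)).continuousWithinAt
  have h0mem : (0:ℝ) ∈ Icc (G' b) (G' a) := ⟨hGb.le, hGa.le⟩
  obtain ⟨τ, hτmem, hτ0⟩ := intermediate_value_Icc' hab hcontG' h0mem
  have hτS : τ ∈ Ioo (0:ℝ) S := hsub hτmem
  refine ⟨τ, hτS, ?_, ?_, ?_⟩
  · rw [hderiv τ hτS, hτ0]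
  · intro τ' hτ' h0
    have hτ'0 : G' τ' = 0 := by rw [← hderiv τ' hτ']; exact h0
    rcases lt_trichotomy τ' τ with h | h | h
    · exact absurd (hanti hτ' hτS h) (by rw [hτ0, hτ'0]; exact lt_irrefl 0)
    · exact h
    · exact absurd (hanti hτS hτ' h) (by rw [hτ0, hτ'0]; exact lt_irrefl 0)
  · intro t ht
    have hpt : ∀ s : ℝ, α * s * Real.log (1 + h₁ / σ2 * (E₁ / s)) +
        (1 - α) * (S - s) * Real.log (1 + h₂ / σ2 * (E₂ / (S - s))) = G s := fun s => by
      simp only [hGdef, gg, hc₁def, hc₂def, mul_div_assoc, mul_assoc]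
    rw [hpt t, hpt τ]
    rcases lt_trichotomy t τ with h | h | h
    · have hIcc : Icc t τ ⊆ Ioo (0:ℝ) S :=
        fun x hx => ⟨lt_of_lt_of_le ht.1 hx.1, lt_of_le_of_lt hx.2 hτS.2⟩
      have hmono : MonotoneOn G (Icc t τ) := by
        apply monotoneOn_of_deriv_nonneg (convex_Icc t τ) (hcont.mono hIcc)
        · rw [interior_Icc]
          exact fun x hx =>
            (hG x (hIcc (Ioo_subset_Icc_self hx))).differentiableAt.differentiableWithinAt
        · rw [interior_Icc]
          intro x hx
          have hxS := hIcc (Ioo_subset_Icc_self hx)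
          rw [hderiv x hxS]
          have := hanti hxS hτS hx.2
          rw [hτ0] at this
          linarith
      exact hmono (left_mem_Icc.2 h.le) (right_mem_Icc.2 h.le) h.le
    · rw [h]
    · have hIcc : Icc τ t ⊆ Ioo (0:ℝ) S :=
        fun x hx => ⟨lt_of_lt_of_le hτS.1 hx.1, lt_of_le_of_lt hx.2 ht.2⟩
      have hmono : AntitoneOn G (Icc τ t) := by
        apply antitoneOn_of_deriv_nonpos (convex_Icc τ t) (hcont.mono hIcc)
        · rw [interior_Icc]
          exact fun x hx =>
            (hG x (hIcc (Ioo_subset_Icc_self hx))).differentiableAt.differentiableWithinAt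
        · rw [interior_Icc]
          intro x hx
          have hxS := hIcc (Ioo_subset_Icc_self hx)
          rw [hderiv x hxS]
          have := hanti hτS hxS hx.1
          rw [hτ0] at this
          linarith
      exact hmono (left_mem_Icc.2 h.le) (right_mem_Icc.2 h.le) h.le
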